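/- Let n ≥ 1 and let μ₀, μ₁ be probability measures on ℝⁿ with H(μ₀|dx) < ∞, H(μ₁|dx) < ∞ and finite second moments ∫|x|² dμ₀ < ∞, ∫|x|² dμ₁ < ∞. Then the entropic cost is finite: −∞ < 𝒜(μ₀,μ₁) < ∞. -/

import Mathlib

open MeasureTheory Filter Set
open scoped ENNReal NNReal

noncomputable section

abbrev Eucl (n : ℕ) : Type := EuclideanSpace ℝ (Fin n)

/-- Heat semigroup `T_t` on `ℝⁿ` (generator `Δ/2`), with `T_0 f = f`. -/
noncomputable def heat (n : ℕ) (t : ℝ) (f : Eucl n → ℝ) (x : Eucl n) : ℝ :=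
  if t = 0 then f x
  else ∫ y : Eucl n, f y * Real.exp (-‖x - y‖ ^ 2 / (2 * t)) / (2 * Real.pi * t) ^ ((n : ℝ) / 2)

/-- Relative entropy `H(ρ dx | dx) = ∫ ρ log ρ dx` of a density `ρ`. -/
noncomputable def entDens (n : ℕ) (ρ : Eucl n → ℝ) : ℝ :=
  ∫ x : Eucl n, ρ x * Real.log (ρ x)

/-- The measure `ρ dx`. -/
noncomputable def densMeas (n : ℕ) (ρ : Eucl n → ℝ) : Measure (Eucl n) :=
  (volume : Measure (Eucl n)).withDensity fun x => ENNReal.ofReal (ρ x)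

/-- The measure `R₀₁(dx dy) = e^{-|x-y|²/2} (2π)^{-n/2} dx dy` on `ℝⁿ × ℝⁿ`. -/
noncomputable def R01 (n : ℕ) : Measure (Eucl n × Eucl n) :=
  (volume : Measure (Eucl n × Eucl n)).withDensity fun p =>
    ENNReal.ofReal (Real.exp (-‖p.1 - p.2‖ ^ 2 / 2) / (2 * Real.pi) ^ ((n : ℝ) / 2))

open Classical in
/-- Relative entropy `H(p|r) = ∫ log (dp/dr) dp`, `+∞` if not absolutely continuous
(or not integrable; the paper's definition requires an integrability condition as well). -/
noncomputable def relEnt {X : Type} [MeasurableSpace X] (p r : Measure X) : EReal :=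
  if p ≪ r ∧ Integrable (fun x => Real.log (p.rnDeriv r x).toReal) p
  then ((∫ x, Real.log (p.rnDeriv r x).toReal ∂p : ℝ) : EReal) else ⊤

/-- `π` is a coupling of `μ0` and `μ1`. -/
def Coupling {X : Type} [MeasurableSpace X] (π : Measure (X × X)) (μ0 μ1 : Measure X) : Prop :=
  IsProbabilityMeasure π ∧ π.map Prod.fst = μ0 ∧ π.map Prod.snd = μ1

/-- Relative entropy of a measure with respect to Lebesgue, `∫ ρ log ρ` for the density `ρ`. -/
noncomputable def entLeb (n : ℕ) (μ : Measure (Eucl n)) : ℝ :=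
  ∫ x, (μ.rnDeriv volume x).toReal * Real.log ((μ.rnDeriv volume x).toReal)

/-- Entropic cost (EReal-valued):
`𝒜(μ0,μ1) = inf { H(π|R₀₁) } - (H(μ0|dx)+H(μ1|dx))/2`. -/
noncomputable def entCostE (n : ℕ) (μ0 μ1 : Measure (Eucl n)) : EReal :=
  (⨅ π : {π : Measure (Eucl n × Eucl n) // Coupling π μ0 μ1}, relEnt (π.1) (R01 n))
    - (((entLeb n μ0 + entLeb n μ1) / 2 : ℝ) : EReal)

/-- Entropic cost, real-valued. -/
noncomputable def entCost (n : ℕ) (μ0 μ1 : Measure (Eucl n)) : ℝ :=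
  (entCostE n μ0 μ1).toReal

/-- Squared quadratic Wasserstein distance. -/
noncomputable def W2sq (n : ℕ) (μ0 μ1 : Measure (Eucl n)) : ℝ :=
  (⨅ π : {π : Measure (Eucl n × Eucl n) // Coupling π μ0 μ1},
      ∫⁻ p, (‖p.1 - p.2‖₊ : ℝ≥0∞) ^ 2 ∂(π.1)).toReal

/-- `f` is (the function of) a Schwartz function. -/
def IsSchwartz (n : ℕ) (f : Eucl n → ℝ) : Prop :=
  ∃ F : SchwartzMap (Eucl n) ℝ, ⇑F = f

/-- The pair `(μ0, μ1)` belongs to `Π_𝒮`: it admits a Schrödinger decomposition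
`μ0 = f·T₁g dx`, `μ1 = g·T₁f dx` with `f, g` positive Schwartz functions bounded below
by a Gaussian. -/
def PiS (n : ℕ) (μ0 μ1 : Measure (Eucl n)) : Prop :=
  ∃ f g : Eucl n → ℝ, IsSchwartz n f ∧ IsSchwartz n g ∧
    (∀ x, 0 < f x) ∧ (∀ x, 0 < g x) ∧
    (∃ α c : ℝ, 0 < α ∧ 0 < c ∧ (∀ x, c * Real.exp (-α * ‖x‖ ^ 2) ≤ f x) ∧
      (∀ x, c * Real.exp (-α * ‖x‖ ^ 2) ≤ g x)) ∧
    μ0 = densMeas n (fun x => f x * heat n 1 g x) ∧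
    μ1 = densMeas n (fun x => g x * heat n 1 f x)

/-- Laplacian `Δφ = ∑ᵢ ∂²φ/∂xᵢ²`. -/
noncomputable def lap (n : ℕ) (φ : Eucl n → ℝ) (x : Eucl n) : ℝ :=
  ∑ i, fderiv ℝ (fun y => fderiv ℝ φ y (EuclideanSpace.single i 1)) x (EuclideanSpace.single i 1)

/-- Squared Hilbert-Schmidt norm of the Hessian, `‖Hess φ‖² = ∑ᵢⱼ (∂ᵢ∂ⱼφ)²`. -/
noncomputable def hessHS (n : ℕ) (φ : Eucl n → ℝ) (x : Eucl n) : ℝ :=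
  ∑ i, ∑ j, (fderiv ℝ (fun y => fderiv ℝ φ y (EuclideanSpace.single j 1)) x
    (EuclideanSpace.single i 1)) ^ 2

/-- Divergence `∇·F = ∑ᵢ ∂Fᵢ/∂xᵢ` of a vector field. -/
noncomputable def diverg (n : ℕ) (F : Eucl n → Eucl n) (x : Eucl n) : ℝ :=
  ∑ i, fderiv ℝ (fun y => F y i) x (EuclideanSpace.single i 1)

/-- Heat semigroup acting componentwise on vector-valued functions. -/
noncomputable def heatV (n : ℕ) (t : ℝ) (F : Eucl n → Eucl n) (x : Eucl n) : Eucl n :=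
  (EuclideanSpace.equiv (Fin n) ℝ).symm (fun i => heat n t (fun y => F y i) x)

/-- Entropic interpolation density `μ_s = T_s f · T_{1-s} g`. -/
noncomputable def entInterp (n : ℕ) (f g : Eucl n → ℝ) (s : ℝ) (x : Eucl n) : ℝ :=
  heat n s f x * heat n (1 - s) g x

/-- The potential `θ_s = (log T_{1-s} g - log T_s f)/2`, whose gradient drives the
transport equation of the entropic interpolation. -/
noncomputable def thetaPot (n : ℕ) (f g : Eucl n → ℝ) (s : ℝ) (x : Eucl n) : ℝ :=
  (Real.log (heat n (1 - s) g x) - Real.log (heat n s f x)) / 2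

end
namespace EntCostAux
open Real MeasureTheory

variable {n : ℕ}

/-- density of R01 -/
noncomputable def rD (n : ℕ) (p : Eucl n × Eucl n) : ℝ :=
  Real.exp (-‖p.1 - p.2‖ ^ 2 / 2) / (2 * Real.pi) ^ ((n : ℝ) / 2)

lemma rD_pos (p : Eucl n × Eucl n) : 0 < rD n p := by
  have : (0:ℝ) < (2 * Real.pi) ^ ((n : ℝ) / 2) :=
    Real.rpow_pos_of_pos (by positivity) _
  exact div_pos (Real.exp_pos _) this

lemma measurable_rD : Measurable (rD n) := by
  apply Measurable.div
  · exact (Continuous.measurable (by continuity)).neg.div_const 2 |>.exp |> fun h => h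
  · exact measurable_const

lemma R01_eq : R01 n = (volume : Measure (Eucl n × Eucl n)).withDensity
    (fun p => ENNReal.ofReal (rD n p)) := rfl

/-- standard gaussian density on Eucl n -/
noncomputable def g1 (n : ℕ) (x : Eucl n) : ℝ :=
  Real.exp (-‖x‖ ^ 2 / 2) / (2 * Real.pi) ^ ((n : ℝ) / 2)

lemma g1_pos (x : Eucl n) : 0 < g1 n x :=
  div_pos (Real.exp_pos _) (Real.rpow_pos_of_pos (by positivity) _)

lemma continuous_g1 : Continuous (g1 n) := by
  apply Continuous.div_const
  exact Real.continuous_exp.comp (continuous_norm.pow 2 |>.neg.div_const 2)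

lemma integrable_exp_norm : Integrable (fun x : Eucl n => Real.exp (-‖x‖^2/2)) := by
  have h := GaussianFourier.integrable_cexp_neg_mul_sq_norm_add
    (V := Eucl n) (b := (1/2 : ℂ)) (by norm_num) 0 0
  have := h.norm
  refine this.congr (Filter.Eventually.of_forall fun x => ?_)
  dsimp only
  rw [show (-(1/2 : ℂ) * (‖x‖:ℂ)^2 + 0 * _) = ((-‖x‖^2/2 : ℝ) : ℂ) by push_cast; ring]
  rw [Complex.norm_exp]
  simp [← Complex.ofReal_pow]

lemma integral_exp_norm :
    ∫ x : Eucl n, Real.exp (-‖x‖^2/2) = (2 * Real.pi) ^ ((n : ℝ) / 2) := by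
  have h := GaussianFourier.integral_rexp_neg_mul_sq_norm (V := Eucl n) (b := (1/2 : ℝ)) (by norm_num)
  rw [show (fun v : Eucl n => Real.exp (-‖v‖^2/2)) = fun v : Eucl n => Real.exp (-(1/2) * ‖v‖^2) by
    funext v; ring_nf]
  rw [h, finrank_euclideanSpace_fin, one_div, div_inv_eq_mul, mul_comm]

lemma integral_g1 : ∫ x : Eucl n, g1 n x = 1 := by
  unfold g1
  rw [integral_div, integral_exp_norm]
  rw [div_self (ne_of_gt (Real.rpow_pos_of_pos (by positivity) _))]

lemma integrable_g1 : Integrable (g1 n) := integrable_exp_norm.div_const _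

lemma lintegral_g1 : ∫⁻ x : Eucl n, ENNReal.ofReal (g1 n x) = 1 := by
  rw [← ofReal_integral_eq_lintegral_ofReal integrable_g1
    (Filter.Eventually.of_forall fun x => (g1_pos x).le), integral_g1, ENNReal.ofReal_one]

end EntCostAux
namespace EntCostAux
open Real MeasureTheory

variable {n : ℕ}

lemma R01_ac : R01 n ≪ (volume : Measure (Eucl n × Eucl n)) := by
  rw [R01_eq]; exact withDensity_absolutelyContinuous _ _

lemma ac_R01 : (volume : Measure (Eucl n × Eucl n)) ≪ R01 n := by
  rw [R01_eq]
  exact withDensity_absolutelyContinuous' measurable_rD.ennreal_ofReal.aemeasurable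
    (Filter.Eventually.of_forall fun p => (ENNReal.ofReal_pos.mpr (rD_pos p)).ne')

lemma log_rnDeriv_R01 (pr : Measure (Eucl n × Eucl n)) [SigmaFinite pr]
    (hac : pr ≪ (volume : Measure (Eucl n × Eucl n))) :
    (fun p => Real.log (pr.rnDeriv (R01 n) p).toReal) =ᵐ[pr]
      fun p => Real.log (pr.rnDeriv volume p).toReal - Real.log (rD n p) := by
  have h1 : pr.rnDeriv (R01 n) =ᵐ[(volume : Measure (Eucl n × Eucl n))]
      fun p => (ENNReal.ofReal (rD n p))⁻¹ * pr.rnDeriv volume p := by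
    rw [R01_eq]
    exact Measure.rnDeriv_withDensity_right pr volume
      measurable_rD.ennreal_ofReal.aemeasurable
      (Filter.Eventually.of_forall fun p => (ENNReal.ofReal_pos.mpr (rD_pos p)).ne')
      (Filter.Eventually.of_forall fun p => ENNReal.ofReal_ne_top)
  have h1' := hac.ae_eq h1
  have hpos := Measure.rnDeriv_pos hac
  have hlt := hac.ae_le (Measure.rnDeriv_lt_top pr volume)
  filter_upwards [h1', hpos, hlt] with p he h2 h3
  rw [he, ENNReal.toReal_mul, ENNReal.toReal_inv, ENNReal.toReal_ofReal (rD_pos p).le,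
    Real.log_mul (inv_ne_zero (rD_pos p).ne') (ENNReal.toReal_pos h2.ne' h3.ne).ne',
    Real.log_inv]
  ring

lemma log_g1_eq (x : Eucl n) :
    Real.log (g1 n x) = -‖x‖^2/2 - ((n : ℝ)/2) * Real.log (2 * Real.pi) := by
  unfold g1
  rw [Real.log_div (Real.exp_ne_zero _)
    (Real.rpow_pos_of_pos (by positivity) _).ne', Real.log_exp,
    Real.log_rpow (by positivity)]

lemma log_rD_eq (p : Eucl n × Eucl n) :
    Real.log (rD n p) = -‖p.1 - p.2‖^2/2 - ((n : ℝ)/2) * Real.log (2 * Real.pi) := by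
  unfold rD
  rw [Real.log_div (Real.exp_ne_zero _)
    (Real.rpow_pos_of_pos (by positivity) _).ne', Real.log_exp,
    Real.log_rpow (by positivity)]

end EntCostAux
namespace EntCostAux
open Real MeasureTheory

variable {n : ℕ}

instance instSFvol (n : ℕ) : SigmaFinite (volume : Measure (Eucl n × Eucl n)) := by
  rw [Measure.volume_eq_prod]; infer_instance

lemma measurable_H (pr : Measure (Eucl n × Eucl n)) :
    Measurable (fun p => (pr.rnDeriv (volume : Measure (Eucl n × Eucl n)) p).toReal) :=
  (Measure.measurable_rnDeriv pr volume).ennreal_toReal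

lemma continuous_g : Continuous (fun p : Eucl n × Eucl n => g1 n p.1 * g1 n p.2) :=
  (continuous_g1.comp continuous_fst).mul (continuous_g1.comp continuous_snd)

lemma lintegral_gProd :
    ∫⁻ p : Eucl n × Eucl n, ENNReal.ofReal (g1 n p.1 * g1 n p.2) = 1 := by
  have : ∀ p : Eucl n × Eucl n, ENNReal.ofReal (g1 n p.1 * g1 n p.2)
      = ENNReal.ofReal (g1 n p.1) * ENNReal.ofReal (g1 n p.2) := fun p =>
    ENNReal.ofReal_mul (g1_pos p.1).le
  simp_rw [this]
  rw [Measure.volume_eq_prod, lintegral_prod_mul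
    (continuous_g1.measurable.ennreal_ofReal.aemeasurable)
    (continuous_g1.measurable.ennreal_ofReal.aemeasurable), lintegral_g1, one_mul]

/-- Gibbs-type inequality: `∫ (log H - log g) dπ ≥ 0`. -/
lemma gibbs (pr : Measure (Eucl n × Eucl n)) [IsProbabilityMeasure pr]
    (hac : pr ≪ (volume : Measure (Eucl n × Eucl n)))
    (hφint : Integrable (fun p =>
      Real.log (pr.rnDeriv volume p).toReal - Real.log (g1 n p.1 * g1 n p.2)) pr) :
    0 ≤ ∫ p, (Real.log (pr.rnDeriv volume p).toReal - Real.log (g1 n p.1 * g1 n p.2)) ∂pr := by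
  set H : Eucl n × Eucl n → ℝ := fun p => (pr.rnDeriv volume p).toReal with hH
  set g : Eucl n × Eucl n → ℝ := fun p => g1 n p.1 * g1 n p.2 with hg
  set φ : Eucl n × Eucl n → ℝ := fun p => Real.log (H p) - Real.log (g p) with hφ
  set u : Eucl n × Eucl n → ℝ := fun p => 1 - φ p with hu
  have huint : Integrable u pr := (integrable_const 1).sub hφint
  have hpos := Measure.rnDeriv_pos hac
  have hlt := hac.ae_le (Measure.rnDeriv_lt_top pr volume)
  have hu_le : ∀ᵐ p ∂pr, u p ≤ g p / H p := by
    filter_upwards [hpos, hlt] with p h2 h3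
    have hHp : 0 < H p := ENNReal.toReal_pos h2.ne' h3.ne
    have hgp : 0 < g p := mul_pos (g1_pos p.1) (g1_pos p.2)
    have := Real.log_le_sub_one_of_pos (div_pos hgp hHp)
    rw [Real.log_div hgp.ne' hHp.ne'] at this
    simp only [hu, hφ]
    linarith
  -- ∫⁻ ofReal (g/H) dpr ≤ 1
  have hkey : ∫⁻ p, ENNReal.ofReal (g p / H p) ∂pr ≤ 1 := by
    have hmeas : Measurable fun p => ENNReal.ofReal (g p / H p) :=
      ((continuous_g.measurable).div (measurable_H pr)).ennreal_ofReal
    conv_lhs => rw [← Measure.withDensity_rnDeriv_eq pr volume hac]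
    rw [lintegral_withDensity_eq_lintegral_mul volume (Measure.measurable_rnDeriv pr volume) hmeas]
    have hle : (fun p => pr.rnDeriv volume p * ENNReal.ofReal (g p / H p))
        ≤ᵐ[(volume : Measure (Eucl n × Eucl n))] fun p => ENNReal.ofReal (g p) := by
      filter_upwards [Measure.rnDeriv_lt_top pr volume] with p h3
      rcases eq_or_ne (pr.rnDeriv volume p) 0 with hz | hz
      · simp [hz]
      · have hHp : 0 < H p := ENNReal.toReal_pos hz h3.ne
        have hgp : 0 ≤ g p := (mul_pos (g1_pos p.1) (g1_pos p.2)).le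
        rw [div_eq_mul_inv, ENNReal.ofReal_mul hgp, ENNReal.ofReal_inv_of_pos hHp,
          ENNReal.ofReal_toReal h3.ne]
        rw [mul_comm (ENNReal.ofReal (g p)) _, ← mul_assoc,
          ENNReal.mul_inv_cancel hz h3.ne, one_mul]
    calc ∫⁻ p, pr.rnDeriv volume p * ENNReal.ofReal (g p / H p) ∂volume
        ≤ ∫⁻ p, ENNReal.ofReal (g p) ∂volume := lintegral_mono_ae hle
      _ = 1 := lintegral_gProd
  -- ∫ u dpr ≤ 1
  have humeas : AEStronglyMeasurable u pr := huint.1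
  have h2 : ∫ p, u p ∂pr ≤ ∫ p, max (u p) 0 ∂pr :=
    integral_mono huint huint.pos_part (fun p => le_max_left _ _)
  have h3a := integral_eq_lintegral_of_nonneg_ae (μ := pr) (f := fun p => max (u p) 0)
    (Filter.Eventually.of_forall fun p => le_max_right _ _) huint.pos_part.1
  have h3b : ∫⁻ p, ENNReal.ofReal (max (u p) 0) ∂pr = ∫⁻ p, ENNReal.ofReal (u p) ∂pr := by
    apply lintegral_congr fun p => ?_
    rcases le_total (u p) 0 with h | h
    · rw [max_eq_right h, ENNReal.ofReal_zero, ENNReal.ofReal_of_nonpos h]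
    · rw [max_eq_left h]
  have h3 : ∫ p, max (u p) 0 ∂pr = (∫⁻ p, ENNReal.ofReal (u p) ∂pr).toReal := by
    rw [h3a, h3b]
  have h4 : ∫⁻ p, ENNReal.ofReal (u p) ∂pr ≤ 1 := by
    refine le_trans (lintegral_mono_ae ?_) hkey
    filter_upwards [hu_le] with p hp using ENNReal.ofReal_le_ofReal hp
  have h5 : (∫⁻ p, ENNReal.ofReal (u p) ∂pr).toReal ≤ 1 := by
    have := ENNReal.toReal_mono (by norm_num) h4
    simpa using this
  have h6 : ∫ p, u p ∂pr = 1 - ∫ p, φ p ∂pr := by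
    rw [hu]
    simp only
    rw [integral_sub (integrable_const 1) hφint, integral_const]
    simp
  have := le_trans h2 (le_of_eq h3) |>.trans h5
  rw [h6] at this
  linarith

end EntCostAux
namespace EntCostAux
open Real MeasureTheory

variable {n : ℕ}

lemma integrable_comp_fst {pr : Measure (Eucl n × Eucl n)} {μ : Measure (Eucl n)}
    {f : Eucl n → ℝ} (hfst : pr.map Prod.fst = μ) (hf : StronglyMeasurable f)
    (h : Integrable f μ) : Integrable (fun p : Eucl n × Eucl n => f p.1) pr := by
  rw [← hfst] at h
  exact (integrable_map_measure hf.aestronglyMeasurable measurable_fst.aemeasurable).mp h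

lemma integrable_comp_snd {pr : Measure (Eucl n × Eucl n)} {μ : Measure (Eucl n)}
    {f : Eucl n → ℝ} (hsnd : pr.map Prod.snd = μ) (hf : StronglyMeasurable f)
    (h : Integrable f μ) : Integrable (fun p : Eucl n × Eucl n => f p.2) pr := by
  rw [← hsnd] at h
  exact (integrable_map_measure hf.aestronglyMeasurable measurable_snd.aemeasurable).mp h

lemma integral_comp_fst {pr : Measure (Eucl n × Eucl n)} {μ : Measure (Eucl n)}
    {f : Eucl n → ℝ} (hfst : pr.map Prod.fst = μ) (hf : StronglyMeasurable f) :
    ∫ p, f p.1 ∂pr = ∫ x, f x ∂μ := by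
  rw [← hfst, integral_map measurable_fst.aemeasurable hf.aestronglyMeasurable]

lemma integral_comp_snd {pr : Measure (Eucl n × Eucl n)} {μ : Measure (Eucl n)}
    {f : Eucl n → ℝ} (hsnd : pr.map Prod.snd = μ) (hf : StronglyMeasurable f) :
    ∫ p, f p.2 ∂pr = ∫ x, f x ∂μ := by
  rw [← hsnd, integral_map measurable_snd.aemeasurable hf.aestronglyMeasurable]

lemma normsq_sub_le (p : Eucl n × Eucl n) : ‖p.1 - p.2‖^2 ≤ 2*‖p.1‖^2 + 2*‖p.2‖^2 := by
  have h := norm_sub_le p.1 p.2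
  have h1 : (0:ℝ) ≤ ‖p.1‖ := norm_nonneg _
  have h2 : (0:ℝ) ≤ ‖p.2‖ := norm_nonneg _
  nlinarith [pow_le_pow_left₀ (norm_nonneg _) h 2, sq_nonneg (‖p.1‖ - ‖p.2‖)]

/-- The function ψ = log g - log rD. -/
lemma psi_eq (p : Eucl n × Eucl n) :
    Real.log (g1 n p.1 * g1 n p.2) - Real.log (rD n p)
      = -‖p.1‖^2/2 - ‖p.2‖^2/2 + ‖p.1 - p.2‖^2/2 - ((n : ℝ)/2) * Real.log (2 * Real.pi) := by
  rw [Real.log_mul (g1_pos p.1).ne' (g1_pos p.2).ne', log_g1_eq, log_g1_eq, log_rD_eq]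
  ring

lemma psi_integrable (pr : Measure (Eucl n × Eucl n)) [IsProbabilityMeasure pr]
    (hm0 : Integrable (fun p : Eucl n × Eucl n => ‖p.1‖^2) pr)
    (hm1 : Integrable (fun p : Eucl n × Eucl n => ‖p.2‖^2) pr) :
    Integrable (fun p => Real.log (g1 n p.1 * g1 n p.2) - Real.log (rD n p)) pr := by
  have hmeas : AEStronglyMeasurable
      (fun p : Eucl n × Eucl n => Real.log (g1 n p.1 * g1 n p.2) - Real.log (rD n p)) pr :=
    ((Real.measurable_log.comp continuous_g.measurable).sub
      (Real.measurable_log.comp measurable_rD)).aestronglyMeasurable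
  refine Integrable.mono' (((hm0.const_mul 2).add (hm1.const_mul 2)).add
    (integrable_const (((n : ℝ)/2) * |Real.log (2 * Real.pi)|))) hmeas
    (Filter.Eventually.of_forall fun p => ?_)
  simp only [Pi.add_apply, Real.norm_eq_abs]
  rw [psi_eq]
  have hd := normsq_sub_le p
  have h1 : (0:ℝ) ≤ ‖p.1‖^2 := sq_nonneg _
  have h2 : (0:ℝ) ≤ ‖p.2‖^2 := sq_nonneg _
  have h3 : (0:ℝ) ≤ ‖p.1 - p.2‖^2 := sq_nonneg _
  have hn2 : (0:ℝ) ≤ (n : ℝ)/2 := by positivity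
  have hk := abs_nonneg (Real.log (2 * Real.pi))
  have hk1 := le_abs_self (Real.log (2 * Real.pi))
  have hk2 := neg_abs_le (Real.log (2 * Real.pi))
  rw [abs_le]
  constructor <;> nlinarith [mul_le_mul_of_nonneg_left hk1 hn2, mul_le_mul_of_nonneg_left hk2 hn2]

/-- Lower bound on the relative entropy integral for a measure with given second moments. -/
lemma lower_bound (pr : Measure (Eucl n × Eucl n)) [IsProbabilityMeasure pr]
    (hac : pr ≪ (volume : Measure (Eucl n × Eucl n)))
    (hm0 : Integrable (fun p : Eucl n × Eucl n => ‖p.1‖^2) pr)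
    (hm1 : Integrable (fun p : Eucl n × Eucl n => ‖p.2‖^2) pr)
    (hint : Integrable (fun p => Real.log (pr.rnDeriv (R01 n) p).toReal) pr) :
    -(((∫ p : Eucl n × Eucl n, ‖p.1‖^2 ∂pr) + ∫ p : Eucl n × Eucl n, ‖p.2‖^2 ∂pr)/2
        + ((n : ℝ)/2) * Real.log (2 * Real.pi))
      ≤ ∫ p, Real.log (pr.rnDeriv (R01 n) p).toReal ∂pr := by
  set ψ : Eucl n × Eucl n → ℝ :=
    fun p => Real.log (g1 n p.1 * g1 n p.2) - Real.log (rD n p) with hψ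
  set φ : Eucl n × Eucl n → ℝ :=
    fun p => Real.log (pr.rnDeriv volume p).toReal - Real.log (g1 n p.1 * g1 n p.2) with hφ
  have hψint : Integrable ψ pr := psi_integrable pr hm0 hm1
  have hae : (fun p => Real.log (pr.rnDeriv (R01 n) p).toReal) =ᵐ[pr] fun p => φ p + ψ p := by
    filter_upwards [log_rnDeriv_R01 pr hac] with p hp
    rw [hp]; simp only [hφ, hψ]; ring
  have hφint : Integrable φ pr := by
    have h1 : Integrable (fun p => φ p + ψ p) pr := (hint.congr hae)
    have := h1.sub hψint
    exact this.congr (Filter.Eventually.of_forall fun p => by simp only [Pi.sub_apply]; ring)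
  have hgibbs : 0 ≤ ∫ p, φ p ∂pr := gibbs pr hac hφint
  have e1 : Integrable (fun p : Eucl n × Eucl n => -(‖p.1‖^2/2) - ‖p.2‖^2/2) pr := by
    exact (hm0.div_const 2).neg.sub (hm1.div_const 2)
  have e0 : Integrable (fun p : Eucl n × Eucl n => -(‖p.1‖^2/2)) pr := by
    exact (hm0.div_const 2).neg
  have e0' : Integrable (fun p : Eucl n × Eucl n => ‖p.2‖^2/2) pr := hm1.div_const 2
  have hBint : Integrable
      (fun p : Eucl n × Eucl n => (-(‖p.1‖^2/2) - ‖p.2‖^2/2) - ((n : ℝ)/2) * Real.log (2 * Real.pi)) pr := by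
    exact e1.sub (integrable_const _)
  have hψlb : ∫ p, ((-(‖p.1‖^2/2) - ‖p.2‖^2/2) - ((n : ℝ)/2) * Real.log (2 * Real.pi)) ∂pr
      ≤ ∫ p, ψ p ∂pr := by
    refine integral_mono hBint hψint (fun p => ?_)
    have h3 : (0:ℝ) ≤ ‖p.1 - p.2‖^2 := sq_nonneg _
    simp only [hψ]
    rw [psi_eq]
    linarith
  have hBval : ∫ p, ((-(‖p.1‖^2/2) - ‖p.2‖^2/2) - ((n : ℝ)/2) * Real.log (2 * Real.pi)) ∂pr
      = -(((∫ p : Eucl n × Eucl n, ‖p.1‖^2 ∂pr) + ∫ p : Eucl n × Eucl n, ‖p.2‖^2 ∂pr)/2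
          + ((n : ℝ)/2) * Real.log (2 * Real.pi)) := by
    rw [integral_sub e1 (integrable_const _), integral_sub e0 e0', integral_neg, integral_div,
      integral_div, integral_const]
    simp only [probReal_univ, measure_univ, ENNReal.toReal_one, one_smul]
    ring
  have hfin : ∫ p, Real.log (pr.rnDeriv (R01 n) p).toReal ∂pr = (∫ p, φ p ∂pr) + ∫ p, ψ p ∂pr := by
    rw [integral_congr_ae hae, integral_add hφint hψint]
  rw [hfin]
  rw [hBval] at hψlb
  linarith

end EntCostAux
namespace EntCostAux
open Real MeasureTheory

variable {n : ℕ}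

lemma prod_eq_withDensity (μ0 μ1 : Measure (Eucl n)) [SigmaFinite μ0] [SigmaFinite μ1]
    (h0 : μ0 ≪ (volume : Measure (Eucl n))) (h1 : μ1 ≪ (volume : Measure (Eucl n))) :
    μ0.prod μ1 = (volume : Measure (Eucl n × Eucl n)).withDensity
      (fun p => μ0.rnDeriv volume p.1 * μ1.rnDeriv volume p.2) := by
  refine Measure.prod_eq fun s t hs ht => ?_
  rw [Measure.volume_eq_prod, withDensity_apply _ (hs.prod ht), ← Measure.prod_restrict,
    lintegral_prod_mul (Measure.measurable_rnDeriv μ0 volume).aemeasurable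
      (Measure.measurable_rnDeriv μ1 volume).aemeasurable,
    Measure.setLIntegral_rnDeriv h0 s, Measure.setLIntegral_rnDeriv h1 t]

lemma prod_ac (μ0 μ1 : Measure (Eucl n)) [SigmaFinite μ0] [SigmaFinite μ1]
    (h0 : μ0 ≪ (volume : Measure (Eucl n))) (h1 : μ1 ≪ (volume : Measure (Eucl n))) :
    μ0.prod μ1 ≪ (volume : Measure (Eucl n × Eucl n)) := by
  rw [prod_eq_withDensity μ0 μ1 h0 h1]
  exact withDensity_absolutelyContinuous _ _

/-- Integrability of `log` of the density w.r.t. the measure itself. -/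
lemma integrable_log_rnDeriv_self (μ : Measure (Eucl n)) [SigmaFinite μ]
    (hac : μ ≪ (volume : Measure (Eucl n)))
    (hent : Integrable (fun x =>
      (μ.rnDeriv volume x).toReal * Real.log ((μ.rnDeriv volume x).toReal))
      (volume : Measure (Eucl n))) :
    Integrable (fun x => Real.log ((μ.rnDeriv volume x).toReal)) μ := by
  have h := (integrable_withDensity_iff (Measure.measurable_rnDeriv μ volume)
    (Measure.rnDeriv_lt_top μ volume)
    (g := fun x => Real.log ((μ.rnDeriv volume x).toReal))).mpr
    (hent.congr (Filter.Eventually.of_forall fun x => mul_comm _ _))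
  rwa [Measure.withDensity_rnDeriv_eq μ volume hac] at h

/-- a.e. formula for the log-density of a product w.r.t. `R01`. -/
lemma prod_log_rnDeriv (μ0 μ1 : Measure (Eucl n)) [IsProbabilityMeasure μ0]
    [IsProbabilityMeasure μ1]
    (h0 : μ0 ≪ (volume : Measure (Eucl n))) (h1 : μ1 ≪ (volume : Measure (Eucl n))) :
    (fun p => Real.log ((μ0.prod μ1).rnDeriv (R01 n) p).toReal) =ᵐ[μ0.prod μ1]
      fun p => Real.log (μ0.rnDeriv volume p.1).toReal
        + Real.log (μ1.rnDeriv volume p.2).toReal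
        + (‖p.1 - p.2‖^2/2 + ((n : ℝ)/2) * Real.log (2 * Real.pi)) := by
  have hπac : μ0.prod μ1 ≪ (volume : Measure (Eucl n × Eucl n)) := prod_ac μ0 μ1 h0 h1
  have hfst : (μ0.prod μ1).map Prod.fst = μ0 := by
    simp [Measure.map_fst_prod, measure_univ]
  have hsnd : (μ0.prod μ1).map Prod.snd = μ1 := by
    simp [Measure.map_snd_prod, measure_univ]
  have lift0 : ∀ {P : Eucl n → Prop}, MeasurableSet {x | P x} → (∀ᵐ x ∂μ0, P x) →
      ∀ᵐ p ∂(μ0.prod μ1), P p.1 := by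
    intro P _ h
    rw [← hfst] at h
    exact ae_of_ae_map measurable_fst.aemeasurable h
  have lift1 : ∀ {P : Eucl n → Prop}, MeasurableSet {x | P x} → (∀ᵐ x ∂μ1, P x) →
      ∀ᵐ p ∂(μ0.prod μ1), P p.2 := by
    intro P _ h
    rw [← hsnd] at h
    exact ae_of_ae_map measurable_snd.aemeasurable h
  have hrnv : (μ0.prod μ1).rnDeriv volume =ᵐ[μ0.prod μ1]
      fun p => μ0.rnDeriv volume p.1 * μ1.rnDeriv volume p.2 := by
    refine hπac.ae_eq ?_
    conv_lhs => rw [prod_eq_withDensity μ0 μ1 h0 h1]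
    exact Measure.rnDeriv_withDensity volume
      (((Measure.measurable_rnDeriv μ0 volume).comp measurable_fst).mul
        ((Measure.measurable_rnDeriv μ1 volume).comp measurable_snd))
  have h0pos : ∀ᵐ p ∂(μ0.prod μ1), 0 < μ0.rnDeriv volume p.1 :=
    lift0 (measurableSet_lt measurable_const (Measure.measurable_rnDeriv μ0 volume))
      (Measure.rnDeriv_pos h0)
  have h1pos : ∀ᵐ p ∂(μ0.prod μ1), 0 < μ1.rnDeriv volume p.2 :=
    lift1 (measurableSet_lt measurable_const (Measure.measurable_rnDeriv μ1 volume))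
      (Measure.rnDeriv_pos h1)
  have h0lt : ∀ᵐ p ∂(μ0.prod μ1), μ0.rnDeriv volume p.1 < ∞ :=
    lift0 (measurableSet_lt (Measure.measurable_rnDeriv μ0 volume) measurable_const)
      (h0.ae_le (Measure.rnDeriv_lt_top μ0 volume))
  have h1lt : ∀ᵐ p ∂(μ0.prod μ1), μ1.rnDeriv volume p.2 < ∞ :=
    lift1 (measurableSet_lt (Measure.measurable_rnDeriv μ1 volume) measurable_const)
      (h1.ae_le (Measure.rnDeriv_lt_top μ1 volume))
  filter_upwards [log_rnDeriv_R01 (μ0.prod μ1) hπac, hrnv, h0pos, h1pos, h0lt, h1lt]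
    with p hp hv hp0 hp1 hl0 hl1
  rw [hp, hv, ENNReal.toReal_mul, log_rD_eq,
    Real.log_mul (ENNReal.toReal_pos hp0.ne' hl0.ne).ne' (ENNReal.toReal_pos hp1.ne' hl1.ne).ne']
  ring

end EntCostAux
namespace EntCostAux
open Real MeasureTheory

variable {n : ℕ}

lemma quad_integrable (pr : Measure (Eucl n × Eucl n)) [IsProbabilityMeasure pr]
    (hm0 : Integrable (fun p : Eucl n × Eucl n => ‖p.1‖^2) pr)
    (hm1 : Integrable (fun p : Eucl n × Eucl n => ‖p.2‖^2) pr) :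
    Integrable (fun p : Eucl n × Eucl n =>
      ‖p.1 - p.2‖^2/2 + ((n : ℝ)/2) * Real.log (2 * Real.pi)) pr := by
  have hmeas : AEStronglyMeasurable (fun p : Eucl n × Eucl n =>
      ‖p.1 - p.2‖^2/2 + ((n : ℝ)/2) * Real.log (2 * Real.pi)) pr :=
    ((((continuous_fst.sub continuous_snd).norm.pow 2).div_const 2).add
      continuous_const).aestronglyMeasurable
  refine Integrable.mono' ((hm0.add hm1).add
    (integrable_const (((n : ℝ)/2) * |Real.log (2 * Real.pi)|))) hmeas
    (Filter.Eventually.of_forall fun p => ?_)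
  simp only [Pi.add_apply, Real.norm_eq_abs]
  have hd := normsq_sub_le p
  have h1 : (0:ℝ) ≤ ‖p.1‖^2 := sq_nonneg _
  have h2 : (0:ℝ) ≤ ‖p.2‖^2 := sq_nonneg _
  have h3 : (0:ℝ) ≤ ‖p.1 - p.2‖^2 := sq_nonneg _
  have hn2 : (0:ℝ) ≤ (n : ℝ)/2 := by positivity
  have hk1 := le_abs_self (Real.log (2 * Real.pi))
  have hk2 := neg_abs_le (Real.log (2 * Real.pi))
  rw [abs_le]
  constructor <;> nlinarith [mul_le_mul_of_nonneg_left hk1 hn2, mul_le_mul_of_nonneg_left hk2 hn2]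

lemma upper_integrable (μ0 μ1 : Measure (Eucl n)) [IsProbabilityMeasure μ0]
    [IsProbabilityMeasure μ1]
    (h0ac : μ0 ≪ (volume : Measure (Eucl n))) (h1ac : μ1 ≪ (volume : Measure (Eucl n)))
    (h0ent : Integrable (fun x =>
      (μ0.rnDeriv volume x).toReal * Real.log ((μ0.rnDeriv volume x).toReal))
      (volume : Measure (Eucl n)))
    (h1ent : Integrable (fun x =>
      (μ1.rnDeriv volume x).toReal * Real.log ((μ1.rnDeriv volume x).toReal))
      (volume : Measure (Eucl n)))
    (h0m : Integrable (fun x => ‖x‖ ^ 2) μ0) (h1m : Integrable (fun x => ‖x‖ ^ 2) μ1) :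
    Integrable (fun p => Real.log ((μ0.prod μ1).rnDeriv (R01 n) p).toReal) (μ0.prod μ1) := by
  have hfst : (μ0.prod μ1).map Prod.fst = μ0 := by
    simp [Measure.map_fst_prod, measure_univ]
  have hsnd : (μ0.prod μ1).map Prod.snd = μ1 := by
    simp [Measure.map_snd_prod, measure_univ]
  have I1 : Integrable (fun p : Eucl n × Eucl n =>
      Real.log ((μ0.rnDeriv volume p.1).toReal)) (μ0.prod μ1) :=
    integrable_comp_fst hfst
      (Real.measurable_log.comp
        (Measure.measurable_rnDeriv μ0 volume).ennreal_toReal).stronglyMeasurable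
      (integrable_log_rnDeriv_self μ0 h0ac h0ent)
  have I2 : Integrable (fun p : Eucl n × Eucl n =>
      Real.log ((μ1.rnDeriv volume p.2).toReal)) (μ0.prod μ1) :=
    integrable_comp_snd hsnd
      (Real.measurable_log.comp
        (Measure.measurable_rnDeriv μ1 volume).ennreal_toReal).stronglyMeasurable
      (integrable_log_rnDeriv_self μ1 h1ac h1ent)
  have Im0 : Integrable (fun p : Eucl n × Eucl n => ‖p.1‖^2) (μ0.prod μ1) :=
    integrable_comp_fst hfst (continuous_norm.pow 2).stronglyMeasurable h0m
  have Im1 : Integrable (fun p : Eucl n × Eucl n => ‖p.2‖^2) (μ0.prod μ1) :=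
    integrable_comp_snd hsnd (continuous_norm.pow 2).stronglyMeasurable h1m
  have I3 := quad_integrable (μ0.prod μ1) Im0 Im1
  exact ((I1.add I2).add I3).congr (prod_log_rnDeriv μ0 μ1 h0ac h1ac).symm

end EntCostAux
/-- Finiteness of the entropic cost for marginals with finite entropy and finite second
moment. -/
theorem entropic_cost_finite (n : ℕ) (hn : 1 ≤ n) (μ0 μ1 : Measure (Eucl n))
    (h0 : IsProbabilityMeasure μ0) (h1 : IsProbabilityMeasure μ1)
    (h0ac : μ0 ≪ (volume : Measure (Eucl n))) (h1ac : μ1 ≪ (volume : Measure (Eucl n)))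
    (h0ent : Integrable (fun x =>
      (μ0.rnDeriv volume x).toReal * Real.log ((μ0.rnDeriv volume x).toReal))
      (volume : Measure (Eucl n)))
    (h1ent : Integrable (fun x =>
      (μ1.rnDeriv volume x).toReal * Real.log ((μ1.rnDeriv volume x).toReal))
      (volume : Measure (Eucl n)))
    (h0m : Integrable (fun x => ‖x‖ ^ 2) μ0) (h1m : Integrable (fun x => ‖x‖ ^ 2) μ1) :
    ⊥ < entCostE n μ0 μ1 ∧ entCostE n μ0 μ1 < ⊤ := by
  classical
  have hfst : (μ0.prod μ1).map Prod.fst = μ0 := by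
    simp [Measure.map_fst_prod, measure_univ]
  have hsnd : (μ0.prod μ1).map Prod.snd = μ1 := by
    simp [Measure.map_snd_prod, measure_univ]
  have hc0 : Coupling (μ0.prod μ1) μ0 μ1 := ⟨inferInstance, hfst, hsnd⟩
  have hπac : μ0.prod μ1 ≪ (volume : Measure (Eucl n × Eucl n)) :=
    EntCostAux.prod_ac μ0 μ1 h0ac h1ac
  have hacR : μ0.prod μ1 ≪ R01 n := hπac.trans EntCostAux.ac_R01
  have hint0 := EntCostAux.upper_integrable μ0 μ1 h0ac h1ac h0ent h1ent h0m h1m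
  set I := ⨅ π : {π : Measure (Eucl n × Eucl n) // Coupling π μ0 μ1}, relEnt (π.1) (R01 n)
    with hI
  -- upper bound
  have hub : I ≤ ((∫ p, Real.log ((μ0.prod μ1).rnDeriv (R01 n) p).toReal ∂(μ0.prod μ1) : ℝ)
      : EReal) := by
    refine iInf_le_of_le ⟨μ0.prod μ1, hc0⟩ ?_
    rw [relEnt, if_pos ⟨hacR, hint0⟩]
  -- lower bound
  have hlb : ((-(((∫ x, ‖x‖^2 ∂μ0) + ∫ x, ‖x‖^2 ∂μ1)/2
      + ((n : ℝ)/2) * Real.log (2 * Real.pi)) : ℝ) : EReal) ≤ I := by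
    refine le_iInf fun π => ?_
    obtain ⟨pr, hcp⟩ := π
    haveI : IsProbabilityMeasure pr := hcp.1
    rw [relEnt]
    split_ifs with h
    · obtain ⟨hac, hint⟩ := h
      have hacv : pr ≪ (volume : Measure (Eucl n × Eucl n)) :=
        hac.trans EntCostAux.R01_ac
      have hm0' : Integrable (fun p : Eucl n × Eucl n => ‖p.1‖^2) pr :=
        EntCostAux.integrable_comp_fst hcp.2.1 (continuous_norm.pow 2).stronglyMeasurable h0m
      have hm1' : Integrable (fun p : Eucl n × Eucl n => ‖p.2‖^2) pr :=
        EntCostAux.integrable_comp_snd hcp.2.2 (continuous_norm.pow 2).stronglyMeasurable h1m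
      have hlow := EntCostAux.lower_bound pr hacv hm0' hm1' hint
      rw [EntCostAux.integral_comp_fst (f := fun x : Eucl n => ‖x‖ ^ 2) hcp.2.1 (continuous_norm.pow 2).stronglyMeasurable,
        EntCostAux.integral_comp_snd (f := fun x : Eucl n => ‖x‖ ^ 2) hcp.2.2 (continuous_norm.pow 2).stronglyMeasurable] at hlow
      exact EReal.coe_le_coe_iff.mpr hlow
    · exact le_top
  have hIt : I ≠ ⊤ := (lt_of_le_of_lt hub (EReal.coe_lt_top _)).ne
  have hIb : I ≠ ⊥ := (lt_of_lt_of_le (EReal.bot_lt_coe _) hlb).ne'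
  have hval : entCostE n μ0 μ1
      = ((I.toReal - (entLeb n μ0 + entLeb n μ1)/2 : ℝ) : EReal) := by
    rw [entCostE, ← hI, ← EReal.coe_toReal hIt hIb, EReal.coe_sub, EReal.toReal_coe]
  rw [hval]
  exact ⟨EReal.bot_lt_coe _, EReal.coe_lt_top _⟩
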